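/- Let (A,B,C) be a semistable system with J = lim_{t→∞} e^{At}. The transfer function G(s) = C(sI−A)^{-1}B belongs to ℋ₂ if and only if CJB = 0; and in that case ‖G‖²_{ℋ₂} = Tr(C𝒫Cᵀ) = Tr(Bᵀ𝒬B), where 𝒫 and 𝒬 are the pseudo controllability and observability Gramians. -/

import Mathlib

open Matrix Filter NormedSpace MeasureTheory Set

section AuxH2

variable {n : ℕ} {A J : Matrix (Fin n) (Fin n) ℝ}

lemma aux_exp_cont (A : Matrix (Fin n) (Fin n) ℝ) :
    Continuous fun t : ℝ => NormedSpace.exp (t • A) := by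
  letI : SeminormedRing (Matrix (Fin n) (Fin n) ℝ) := Matrix.linftyOpSemiNormedRing
  letI : NormedRing (Matrix (Fin n) (Fin n) ℝ) := Matrix.linftyOpNormedRing
  letI : NormedAlgebra ℝ (Matrix (Fin n) (Fin n) ℝ) := Matrix.linftyOpNormedAlgebra
  letI : NormedAlgebra ℚ (Matrix (Fin n) (Fin n) ℝ) := NormedAlgebra.restrictScalars ℚ ℝ _
  exact exp_continuous.comp (continuous_id.smul continuous_const)

lemma aux_exp_add (A : Matrix (Fin n) (Fin n) ℝ) (s t : ℝ) :
    NormedSpace.exp ((s + t) • A) = NormedSpace.exp (s • A) * NormedSpace.exp (t • A) := by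
  rw [add_smul]
  exact Matrix.exp_add_of_commute _ _ (((Commute.refl A).smul_left s).smul_right t)

lemma aux_exp_J (hlim : Tendsto (fun t : ℝ => NormedSpace.exp (t • A)) atTop (nhds J)) (t : ℝ) :
    NormedSpace.exp (t • A) * J = J := by
  have h2 : Tendsto (fun s : ℝ => NormedSpace.exp ((t + s) • A)) atTop (nhds J) :=
    hlim.comp (tendsto_atTop_add_const_left atTop t tendsto_id)
  have h1 : Tendsto (fun s : ℝ => NormedSpace.exp ((t + s) • A)) atTop (nhds (NormedSpace.exp (t • A) * J)) := by
    simp only [aux_exp_add]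
    exact hlim.const_mul _
  exact tendsto_nhds_unique h1 h2

lemma aux_J_exp (hlim : Tendsto (fun t : ℝ => NormedSpace.exp (t • A)) atTop (nhds J)) (t : ℝ) :
    J * NormedSpace.exp (t • A) = J := by
  have h2 : Tendsto (fun s : ℝ => NormedSpace.exp ((s + t) • A)) atTop (nhds J) :=
    hlim.comp (tendsto_atTop_add_const_right atTop t tendsto_id)
  have h1 : Tendsto (fun s : ℝ => NormedSpace.exp ((s + t) • A)) atTop (nhds (J * NormedSpace.exp (t • A))) := by
    simp only [aux_exp_add]
    exact hlim.mul_const _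
  exact tendsto_nhds_unique h1 h2

lemma aux_JJ (hlim : Tendsto (fun t : ℝ => NormedSpace.exp (t • A)) atTop (nhds J)) : J * J = J := by
  have h1 : Tendsto (fun t : ℝ => NormedSpace.exp (t • A) * J) atTop (nhds (J * J)) := hlim.mul_const _
  have h2 : Tendsto (fun t : ℝ => NormedSpace.exp (t • A) * J) atTop (nhds J) := by
    simp only [aux_exp_J hlim]; exact tendsto_const_nhds
  exact tendsto_nhds_unique h1 h2

lemma aux_semigroup (hlim : Tendsto (fun t : ℝ => NormedSpace.exp (t • A)) atTop (nhds J)) (s t : ℝ) :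
    (NormedSpace.exp (s • A) - J) * (NormedSpace.exp (t • A) - J) = NormedSpace.exp ((s + t) • A) - J := by
  rw [sub_mul, mul_sub, mul_sub, aux_exp_J hlim, aux_J_exp hlim, aux_JJ hlim, aux_exp_add]
  abel

lemma aux_decay (hlim : Tendsto (fun t : ℝ => NormedSpace.exp (t • A)) atTop (nhds J)) :
    ∃ c ε : ℝ, 0 ≤ c ∧ 0 < ε ∧ ∀ t : ℝ, 0 ≤ t → ∀ i j,
      |(NormedSpace.exp (t • A) - J) i j| ≤ c * Real.exp (-ε * t) := by
  letI : SeminormedRing (Matrix (Fin n) (Fin n) ℝ) := Matrix.linftyOpSemiNormedRing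
  letI : NormedRing (Matrix (Fin n) (Fin n) ℝ) := Matrix.linftyOpNormedRing
  set f : ℝ → Matrix (Fin n) (Fin n) ℝ := fun t => NormedSpace.exp (t • A) - J with hf
  have hfc : Continuous f := (aux_exp_cont A).sub continuous_const
  have hf0 : Tendsto f atTop (nhds 0) := by
    have h := hlim.sub (tendsto_const_nhds (x := J))
    simpa using h
  -- entry bound by norm
  have hentry : ∀ (M : Matrix (Fin n) (Fin n) ℝ) i j, |M i j| ≤ ‖M‖ := by
    intro M i j
    have h1 : ‖M i j‖₊ ≤ ∑ j' : Fin n, ‖M i j'‖₊ :=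
      Finset.single_le_sum (f := fun j' => ‖M i j'‖₊) (fun _ _ => by positivity) (Finset.mem_univ j)
    have h2 : (∑ j' : Fin n, ‖M i j'‖₊) ≤ Finset.univ.sup fun i : Fin n => ∑ j' : Fin n, ‖M i j'‖₊ :=
      Finset.le_sup (f := fun i : Fin n => ∑ j' : Fin n, ‖M i j'‖₊) (Finset.mem_univ i)
    have := h1.trans h2
    rw [← Matrix.linfty_opNNNorm_def] at this
    calc |M i j| = ‖M i j‖ := (Real.norm_eq_abs _).symm
    _ ≤ ‖M‖ := by exact_mod_cast this
  -- choose T with ‖f T‖ ≤ 1/2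
  have hev : ∀ᶠ t : ℝ in atTop, ‖f t‖ < 1 / 2 := by
    have := Metric.tendsto_nhds.mp hf0 (1 / 2) (by norm_num)
    simpa [dist_zero_right] using this
  obtain ⟨T0, hT0⟩ := eventually_atTop.mp hev
  set T : ℝ := max T0 1 with hTdef
  have hT1 : (1 : ℝ) ≤ T := le_max_right _ _
  have hTpos : 0 < T := lt_of_lt_of_le one_pos hT1
  have hfT : ‖f T‖ ≤ 1 / 2 := (hT0 T (le_max_left _ _)).le
  -- bound on [0, T]
  obtain ⟨Cm, hCm⟩ := (isCompact_Icc : IsCompact (Icc (0 : ℝ) T)).exists_bound_of_continuousOn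
    hfc.continuousOn
  have hCm0 : 0 ≤ Cm := le_trans (norm_nonneg _) (hCm 0 ⟨le_refl _, hTpos.le⟩)
  -- inductive bound
  have hsem : ∀ s t : ℝ, f (s + t) = f s * f t := fun s t => (aux_semigroup hlim s t).symm
  have key : ∀ k : ℕ, ∀ r : ℝ, r ∈ Icc (0 : ℝ) T →
      ‖f (k * T + r)‖ ≤ (1 / 2 : ℝ) ^ k * Cm := by
    intro k
    induction k with
    | zero => intro r hr; simpa using hCm r hr
    | succ k ih =>
      intro r hr
      have harith : ((k : ℝ) + 1) * T + r = T + (k * T + r) := by ring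
      have : f (((k : ℕ) + 1 : ℕ) * T + r) = f T * f (k * T + r) := by
        push_cast
        rw [harith, hsem]
      rw [this]
      calc ‖f T * f (k * T + r)‖ ≤ ‖f T‖ * ‖f (k * T + r)‖ := norm_mul_le _ _
      _ ≤ (1 / 2) * ((1 / 2) ^ k * Cm) := by
          apply mul_le_mul hfT (ih r hr) (norm_nonneg _) (by norm_num)
      _ = (1 / 2) ^ (k + 1) * Cm := by ring
  -- final bound
  refine ⟨2 * Cm, Real.log 2 / T, by linarith, div_pos (Real.log_pos one_lt_two) hTpos, ?_⟩
  intro t ht i j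
  set k : ℕ := ⌊t / T⌋₊ with hk
  have hkle : (k : ℝ) * T ≤ t := by
    rw [← le_div_iff₀ hTpos]
    exact Nat.floor_le (div_nonneg ht hTpos.le)
  have hklt : t < ((k : ℝ) + 1) * T := by
    rw [← div_lt_iff₀ hTpos]
    exact Nat.lt_floor_add_one _
  have hr : t - k * T ∈ Icc (0 : ℝ) T := ⟨by linarith, by nlinarith⟩
  have h1 : ‖f t‖ ≤ (1 / 2 : ℝ) ^ k * Cm := by
    have := key k (t - k * T) hr
    simpa [add_sub_cancel] using this
  have h2 : ((1 : ℝ) / 2) ^ k ≤ 2 * Real.exp (-(Real.log 2 / T) * t) := by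
    have hhalf : ((1 : ℝ) / 2) ^ k = Real.exp (-(k * Real.log 2)) := by
      rw [Real.exp_neg, Real.exp_nat_mul, Real.exp_log two_pos]
      simp [one_div, inv_pow]
    rw [hhalf]
    have harg : -(k * Real.log 2) ≤ Real.log 2 + (-(Real.log 2 / T) * t) := by
      have hlog : 0 < Real.log 2 := Real.log_pos one_lt_two
      have : t / T ≤ (k : ℝ) + 1 := by
        rw [div_le_iff₀ hTpos]; nlinarith
      have h3 : (Real.log 2 / T) * t ≤ ((k : ℝ) + 1) * Real.log 2 := by
        calc (Real.log 2 / T) * t ≤ (Real.log 2 / T) * (((k : ℝ) + 1) * T) :=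
          mul_le_mul_of_nonneg_left hklt.le (by positivity)
        _ = ((k : ℝ) + 1) * Real.log 2 := by field_simp
      linarith
    calc Real.exp (-(k * Real.log 2)) ≤ Real.exp (Real.log 2 + (-(Real.log 2 / T) * t)) :=
      Real.exp_le_exp.mpr harg
    _ = 2 * Real.exp (-(Real.log 2 / T) * t) := by
        rw [Real.exp_add, Real.exp_log two_pos]
  calc |f t i j| ≤ ‖f t‖ := hentry _ i j
  _ ≤ (1 / 2 : ℝ) ^ k * Cm := h1
  _ ≤ (2 * Real.exp (-(Real.log 2 / T) * t)) * Cm := by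
      apply mul_le_mul_of_nonneg_right h2 hCm0
  _ = 2 * Cm * Real.exp (-(Real.log 2 / T) * t) := by ring

end AuxH2

lemma aux_trace_sq {q p : ℕ} (N : Matrix (Fin q) (Fin p) ℝ) :
    Matrix.trace (N * Nᵀ) = ∑ i, ∑ j, (N i j) ^ 2 := by
  simp [Matrix.trace, Matrix.mul_apply, Matrix.diag, sq]

lemma aux_trace_sq_nonneg {q p : ℕ} (N : Matrix (Fin q) (Fin p) ℝ) :
    0 ≤ Matrix.trace (N * Nᵀ) := by
  rw [aux_trace_sq]; positivity

lemma aux_trace_sq_pos {q p : ℕ} (N : Matrix (Fin q) (Fin p) ℝ) (hN : N ≠ 0) :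
    0 < Matrix.trace (N * Nᵀ) := by
  rcases lt_or_eq_of_le (aux_trace_sq_nonneg N) with h | h
  · exact h
  · exfalso; apply hN
    have hz : ∀ i ∈ (Finset.univ : Finset (Fin q)), ∑ j, (N i j)^2 = 0 := by
      intro i _
      exact (Finset.sum_eq_zero_iff_of_nonneg (fun i _ => by positivity)).mp
        (by rw [← aux_trace_sq N, ← h] :
          ∑ i, ∑ j, (N i j)^2 = 0) i (Finset.mem_univ i)
    ext i j
    have := (Finset.sum_eq_zero_iff_of_nonneg (fun j _ => by positivity)).mp
      (hz i (Finset.mem_univ i)) j (Finset.mem_univ j)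
    simpa [pow_eq_zero_iff] using this

lemma aux_entry_triple {a b c d : ℕ} (U : Matrix (Fin a) (Fin b) ℝ)
    (W : Matrix (Fin b) (Fin c) ℝ) (V : Matrix (Fin c) (Fin d) ℝ) (i : Fin a) (j : Fin d) :
    |(U * W * V) i j| ≤ ∑ k, ∑ l, |U i k| * |W k l| * |V l j| := by
  have he : (U * W * V) i j = ∑ k, ∑ l, U i k * W k l * V l j := by
    simp only [Matrix.mul_apply, Finset.sum_mul]
    rw [Finset.sum_comm]
  rw [he]
  calc |∑ k, ∑ l, U i k * W k l * V l j| ≤ ∑ k, |∑ l, U i k * W k l * V l j| :=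
        Finset.abs_sum_le_sum_abs _ _
  _ ≤ ∑ k, ∑ l, |U i k * W k l * V l j| :=
        Finset.sum_le_sum fun k _ => Finset.abs_sum_le_sum_abs _ _
  _ = ∑ k, ∑ l, |U i k| * |W k l| * |V l j| := by simp [abs_mul]

lemma aux_trace_mul_sum {n : ℕ} (W M : Matrix (Fin n) (Fin n) ℝ) :
    Matrix.trace (W * M) = ∑ k, ∑ l, W k l * M l k := by
  simp [Matrix.trace, Matrix.mul_apply, Matrix.diag]

/-- For a semistable system `(A,B,C)` with `J = lim e^{At}`, the transfer function
`G(s) = C(sI−A)⁻¹B` is in `ℋ₂` (i.e. the impulse response `t ↦ C e^{At} B` is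
square-integrable on `[0,∞)`) iff `CJB = 0`, and in that case
`‖G‖²_{ℋ₂} = Tr(C 𝒫 Cᵀ) = Tr(Bᵀ 𝒬 B)` with `𝒫, 𝒬` the pseudo Gramians. -/
theorem semistable_H2_norm {n p q : ℕ}
    (A J : Matrix (Fin n) (Fin n) ℝ)
    (B : Matrix (Fin n) (Fin p) ℝ) (C : Matrix (Fin q) (Fin n) ℝ)
    (hlim : Tendsto (fun t : ℝ => NormedSpace.exp (t • A)) atTop (nhds J))
    (P Q : Matrix (Fin n) (Fin n) ℝ)
    (hP : ∀ i j, P i j = ∫ t in Set.Ioi (0 : ℝ),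
        ((NormedSpace.exp (t • A) - J) * B * Bᵀ * (NormedSpace.exp (t • A) - J)ᵀ) i j)
    (hQ : ∀ i j, Q i j = ∫ t in Set.Ioi (0 : ℝ),
        ((NormedSpace.exp (t • A) - J)ᵀ * Cᵀ * C * (NormedSpace.exp (t • A) - J)) i j) :
    ((IntegrableOn
        (fun t : ℝ => Matrix.trace (C * NormedSpace.exp (t • A) * B * (C * NormedSpace.exp (t • A) * B)ᵀ))
        (Set.Ioi 0)) ↔ C * J * B = 0) ∧
    (C * J * B = 0 →
      (∫ t in Set.Ioi (0 : ℝ),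
          Matrix.trace (C * NormedSpace.exp (t • A) * B * (C * NormedSpace.exp (t • A) * B)ᵀ))
        = Matrix.trace (C * P * Cᵀ) ∧
      (∫ t in Set.Ioi (0 : ℝ),
          Matrix.trace (C * NormedSpace.exp (t • A) * B * (C * NormedSpace.exp (t • A) * B)ᵀ))
        = Matrix.trace (Bᵀ * Q * B)) := by
  obtain ⟨c, ε, hc0, hε, hdec⟩ := aux_decay hlim
  set f : ℝ → Matrix (Fin n) (Fin n) ℝ := fun t => NormedSpace.exp (t • A) - J with hfdef
  have hfc : Continuous f := (aux_exp_cont A).sub continuous_const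
  set φ : ℝ → ℝ :=
    fun t => Matrix.trace (C * NormedSpace.exp (t • A) * B * (C * NormedSpace.exp (t • A) * B)ᵀ) with hφdef
  have hgc : Continuous fun t : ℝ => C * NormedSpace.exp (t • A) * B :=
    (continuous_const.matrix_mul (aux_exp_cont A)).matrix_mul continuous_const
  have hφc : Continuous φ := (hgc.matrix_mul hgc.matrix_transpose).matrix_trace
  have hφ_nonneg : ∀ t, 0 ≤ φ t := fun t => aux_trace_sq_nonneg _
  -- under CJB = 0, C e^{tA} B = C f(t) B
  have hgf : C * J * B = 0 → ∀ t : ℝ, C * NormedSpace.exp (t • A) * B = C * f t * B := by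
    intro h0 t
    rw [hfdef]
    simp only [Matrix.mul_sub, Matrix.sub_mul, h0, sub_zero]
  -- reverse direction : integrability
  have hInt : C * J * B = 0 → IntegrableOn φ (Set.Ioi 0) := by
    intro h0
    set S : ℝ := ∑ i : Fin q, ∑ j : Fin p,
      (∑ k : Fin n, ∑ l : Fin n, |C i k| * |B l j|) ^ 2 with hSdef
    have hS0 : 0 ≤ S := by positivity
    have hbound : ∀ t : ℝ, 0 ≤ t → φ t ≤ S * c ^ 2 * Real.exp (-(2 * ε) * t) := by
      intro t ht
      have hent : ∀ i j, |(C * f t * B) i j| ≤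
          (∑ k : Fin n, ∑ l : Fin n, |C i k| * |B l j|) * (c * Real.exp (-ε * t)) := by
        intro i j
        refine (aux_entry_triple C (f t) B i j).trans ?_
        rw [Finset.sum_mul]
        refine Finset.sum_le_sum fun k _ => ?_
        rw [Finset.sum_mul]
        refine Finset.sum_le_sum fun l _ => ?_
        have hfkl : |f t k l| ≤ c * Real.exp (-ε * t) := hdec t ht k l
        calc |C i k| * |f t k l| * |B l j| = |C i k| * |B l j| * |f t k l| := by ring
        _ ≤ |C i k| * |B l j| * (c * Real.exp (-ε * t)) := by
            exact mul_le_mul_of_nonneg_left hfkl (by positivity)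
      have hφt : φ t = ∑ i, ∑ j, ((C * f t * B) i j) ^ 2 := by
        rw [hφdef]; simp only [hgf h0 t]; exact aux_trace_sq _
      rw [hφt]
      have hexp2 : (c * Real.exp (-ε * t)) ^ 2 = c ^ 2 * Real.exp (-(2 * ε) * t) := by
        rw [mul_pow, ← Real.exp_nat_mul]
        ring_nf
      calc ∑ i, ∑ j, ((C * f t * B) i j) ^ 2
          ≤ ∑ i : Fin q, ∑ j : Fin p,
            ((∑ k : Fin n, ∑ l : Fin n, |C i k| * |B l j|) * (c * Real.exp (-ε * t))) ^ 2 := by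
            refine Finset.sum_le_sum fun i _ => Finset.sum_le_sum fun j _ => ?_
            rw [← sq_abs]
            exact pow_le_pow_left₀ (abs_nonneg _) (hent i j) 2
      _ = S * (c ^ 2 * Real.exp (-(2 * ε) * t)) := by
            rw [← hexp2, hSdef, Finset.sum_mul]
            congr 1; funext i
            rw [Finset.sum_mul]
            congr 1; funext j
            ring
      _ = S * c ^ 2 * Real.exp (-(2 * ε) * t) := by ring
    have hmaj : IntegrableOn (fun t => S * c ^ 2 * Real.exp (-(2 * ε) * t)) (Set.Ioi 0) :=
      (exp_neg_integrableOn_Ioi 0 (by positivity)).const_mul _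
    refine Integrable.mono' hmaj (hφc.aestronglyMeasurable.restrict) ?_
    filter_upwards [ae_restrict_mem measurableSet_Ioi] with t ht
    rw [Real.norm_eq_abs, abs_of_nonneg (hφ_nonneg t)]
    exact hbound t (le_of_lt ht)
  constructor
  · constructor
    · -- integrable → CJB = 0
      intro hint
      by_contra hne
      have hpos : 0 < Matrix.trace ((C * J * B) * (C * J * B)ᵀ) := aux_trace_sq_pos _ hne
      set c0 : ℝ := Matrix.trace ((C * J * B) * (C * J * B)ᵀ) with hc0def
      have hX : Continuous fun X : Matrix (Fin n) (Fin n) ℝ => C * X * B :=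
        (continuous_const.matrix_mul continuous_id).matrix_mul continuous_const
      have hF : Continuous fun X : Matrix (Fin n) (Fin n) ℝ =>
          Matrix.trace (C * X * B * (C * X * B)ᵀ) :=
        (hX.matrix_mul hX.matrix_transpose).matrix_trace
      have htend : Tendsto φ atTop (nhds c0) := by
        have := (hF.tendsto J).comp hlim
        exact this
      have hev : ∀ᶠ t : ℝ in atTop, c0 / 2 < φ t :=
        htend.eventually (eventually_gt_nhds (by linarith))
      obtain ⟨T, hT⟩ := eventually_atTop.mp hev
      set T' : ℝ := max T 0 with hT'def
      have hsub : IntegrableOn φ (Set.Ioi T') :=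
        hint.mono_set (Ioi_subset_Ioi (le_max_right _ _))
      have hconst : IntegrableOn (fun _ : ℝ => c0 / 2) (Set.Ioi T') := by
        refine Integrable.mono hsub aestronglyMeasurable_const ?_
        filter_upwards [ae_restrict_mem measurableSet_Ioi] with t ht
        have h1 := hT t (le_trans (le_max_left T 0) ht.le)
        rw [Real.norm_eq_abs, Real.norm_eq_abs, abs_of_pos (by linarith),
          abs_of_pos (lt_trans (by linarith) h1)]
        linarith
      rcases (integrableOn_const_iff (C := c0 / 2)).mp hconst with h | h
      · simp at h; linarith
      · simp [Real.volume_Ioi] at h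
    · intro h0
      exact hInt h0
  · -- the two integral identities
    intro h0
    -- integrability of the entries of the P-integrand
    have hFPc : Continuous fun t : ℝ => f t * B * Bᵀ * (f t)ᵀ :=
      ((hfc.matrix_mul continuous_const).matrix_mul continuous_const).matrix_mul
        hfc.matrix_transpose
    have hFQc : Continuous fun t : ℝ => (f t)ᵀ * Cᵀ * C * f t :=
      ((hfc.matrix_transpose.matrix_mul continuous_const).matrix_mul continuous_const).matrix_mul
        hfc
    set KB : ℝ := ∑ a : Fin n, ∑ b : Fin n, |(B * Bᵀ) a b| with hKBdef
    set KC : ℝ := ∑ a : Fin n, ∑ b : Fin n, |(Cᵀ * C) a b| with hKCdef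
    have hexp2 : ∀ t : ℝ, (c * Real.exp (-ε * t)) * (c * Real.exp (-ε * t))
        = c ^ 2 * Real.exp (-(2 * ε) * t) := by
      intro t
      rw [show -(2 * ε) * t = -ε * t + -ε * t by ring, Real.exp_add]
      ring
    have hPent : ∀ (k l : Fin n) (t : ℝ), 0 ≤ t →
        |(f t * B * Bᵀ * (f t)ᵀ) k l| ≤ KB * c ^ 2 * Real.exp (-(2 * ε) * t) := by
      intro k l t ht
      have hassoc : f t * B * Bᵀ * (f t)ᵀ = f t * (B * Bᵀ) * (f t)ᵀ := by
        rw [Matrix.mul_assoc (f t) B Bᵀ]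
      rw [hassoc]
      refine (aux_entry_triple (f t) (B * Bᵀ) (f t)ᵀ k l).trans ?_
      have : ∀ a b : Fin n, |f t k a| * |(B * Bᵀ) a b| * |(f t)ᵀ b l| ≤
          (c * Real.exp (-ε * t)) * |(B * Bᵀ) a b| * (c * Real.exp (-ε * t)) := by
        intro a b
        have h1 := hdec t ht k a
        have h2 := hdec t ht l b
        have h2' : |(f t)ᵀ b l| ≤ c * Real.exp (-ε * t) := by
          rw [Matrix.transpose_apply]; exact h2
        have hb : (0:ℝ) ≤ |(B * Bᵀ) a b| := abs_nonneg _
        calc |f t k a| * |(B * Bᵀ) a b| * |(f t)ᵀ b l|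
            ≤ (c * Real.exp (-ε * t)) * |(B * Bᵀ) a b| * |(f t)ᵀ b l| := by
              apply mul_le_mul_of_nonneg_right (mul_le_mul_of_nonneg_right h1 hb) (abs_nonneg _)
        _ ≤ (c * Real.exp (-ε * t)) * |(B * Bᵀ) a b| * (c * Real.exp (-ε * t)) := by
              apply mul_le_mul_of_nonneg_left h2' (by positivity)
      calc (∑ a, ∑ b, |f t k a| * |(B * Bᵀ) a b| * |(f t)ᵀ b l|)
          ≤ ∑ a : Fin n, ∑ b : Fin n,
            (c * Real.exp (-ε * t)) * |(B * Bᵀ) a b| * (c * Real.exp (-ε * t)) :=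
            Finset.sum_le_sum fun a _ => Finset.sum_le_sum fun b _ => this a b
      _ = KB * (c * Real.exp (-ε * t) * (c * Real.exp (-ε * t))) := by
            rw [hKBdef, Finset.sum_mul]
            refine Finset.sum_congr rfl fun a _ => ?_
            rw [Finset.sum_mul]
            refine Finset.sum_congr rfl fun b _ => ?_
            ring
      _ = KB * (c ^ 2 * Real.exp (-(2 * ε) * t)) := by rw [hexp2 t]
      _ = KB * c ^ 2 * Real.exp (-(2 * ε) * t) := by ring
    have hQent : ∀ (k l : Fin n) (t : ℝ), 0 ≤ t →
        |((f t)ᵀ * Cᵀ * C * f t) k l| ≤ KC * c ^ 2 * Real.exp (-(2 * ε) * t) := by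
      intro k l t ht
      have hassoc : (f t)ᵀ * Cᵀ * C * f t = (f t)ᵀ * (Cᵀ * C) * f t := by
        rw [Matrix.mul_assoc ((f t)ᵀ) Cᵀ C]
      rw [hassoc]
      refine (aux_entry_triple ((f t)ᵀ) (Cᵀ * C) (f t) k l).trans ?_
      have : ∀ a b : Fin n, |(f t)ᵀ k a| * |(Cᵀ * C) a b| * |f t b l| ≤
          (c * Real.exp (-ε * t)) * |(Cᵀ * C) a b| * (c * Real.exp (-ε * t)) := by
        intro a b
        have h1 : |(f t)ᵀ k a| ≤ c * Real.exp (-ε * t) := by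
          rw [Matrix.transpose_apply]; exact hdec t ht a k
        have h2 := hdec t ht b l
        have hb : (0:ℝ) ≤ |(Cᵀ * C) a b| := abs_nonneg _
        calc |(f t)ᵀ k a| * |(Cᵀ * C) a b| * |f t b l|
            ≤ (c * Real.exp (-ε * t)) * |(Cᵀ * C) a b| * |f t b l| := by
              apply mul_le_mul_of_nonneg_right (mul_le_mul_of_nonneg_right h1 hb) (abs_nonneg _)
        _ ≤ (c * Real.exp (-ε * t)) * |(Cᵀ * C) a b| * (c * Real.exp (-ε * t)) := by
              apply mul_le_mul_of_nonneg_left h2 (by positivity)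
      calc (∑ a, ∑ b, |(f t)ᵀ k a| * |(Cᵀ * C) a b| * |f t b l|)
          ≤ ∑ a : Fin n, ∑ b : Fin n,
            (c * Real.exp (-ε * t)) * |(Cᵀ * C) a b| * (c * Real.exp (-ε * t)) :=
            Finset.sum_le_sum fun a _ => Finset.sum_le_sum fun b _ => this a b
      _ = KC * (c * Real.exp (-ε * t) * (c * Real.exp (-ε * t))) := by
            rw [hKCdef, Finset.sum_mul]
            refine Finset.sum_congr rfl fun a _ => ?_
            rw [Finset.sum_mul]
            refine Finset.sum_congr rfl fun b _ => ?_
            ring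
      _ = KC * (c ^ 2 * Real.exp (-(2 * ε) * t)) := by rw [hexp2 t]
      _ = KC * c ^ 2 * Real.exp (-(2 * ε) * t) := by ring
    have hmajP : IntegrableOn (fun t => KB * c ^ 2 * Real.exp (-(2 * ε) * t)) (Set.Ioi 0) :=
      (exp_neg_integrableOn_Ioi 0 (by positivity)).const_mul _
    have hmajQ : IntegrableOn (fun t => KC * c ^ 2 * Real.exp (-(2 * ε) * t)) (Set.Ioi 0) :=
      (exp_neg_integrableOn_Ioi 0 (by positivity)).const_mul _
    have hIP : ∀ k l : Fin n,
        IntegrableOn (fun t => (f t * B * Bᵀ * (f t)ᵀ) k l) (Set.Ioi 0) := by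
      intro k l
      refine Integrable.mono' hmajP ((hFPc.matrix_elem k l).aestronglyMeasurable.restrict) ?_
      filter_upwards [ae_restrict_mem measurableSet_Ioi] with t ht
      rw [Real.norm_eq_abs]
      exact hPent k l t ht.le
    have hIQ : ∀ k l : Fin n,
        IntegrableOn (fun t => ((f t)ᵀ * Cᵀ * C * f t) k l) (Set.Ioi 0) := by
      intro k l
      refine Integrable.mono' hmajQ ((hFQc.matrix_elem k l).aestronglyMeasurable.restrict) ?_
      filter_upwards [ae_restrict_mem measurableSet_Ioi] with t ht
      rw [Real.norm_eq_abs]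
      exact hQent k l t ht.le
    -- pointwise identification of the integrand
    have hptP : ∀ t : ℝ,
        φ t = ∑ k, ∑ l, (Cᵀ * C) k l * (f t * B * Bᵀ * (f t)ᵀ) l k := by
      intro t
      rw [← aux_trace_mul_sum]
      rw [hφdef]
      simp only [hgf h0 t]
      calc Matrix.trace ((C * f t * B) * (C * f t * B)ᵀ)
          = Matrix.trace ((C * (f t * B * Bᵀ * (f t)ᵀ)) * Cᵀ) := by
            congr 1
            simp only [Matrix.transpose_mul, Matrix.mul_assoc]
      _ = Matrix.trace (Cᵀ * (C * (f t * B * Bᵀ * (f t)ᵀ))) := Matrix.trace_mul_comm _ _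
      _ = Matrix.trace (Cᵀ * C * (f t * B * Bᵀ * (f t)ᵀ)) := by
            simp only [← Matrix.mul_assoc]
    have hptQ : ∀ t : ℝ,
        φ t = ∑ k, ∑ l, (B * Bᵀ) k l * ((f t)ᵀ * Cᵀ * C * f t) l k := by
      intro t
      rw [← aux_trace_mul_sum]
      rw [hφdef]
      simp only [hgf h0 t]
      calc Matrix.trace ((C * f t * B) * (C * f t * B)ᵀ)
          = Matrix.trace ((C * f t * B)ᵀ * (C * f t * B)) := Matrix.trace_mul_comm _ _
      _ = Matrix.trace ((Bᵀ * ((f t)ᵀ * Cᵀ * C * f t)) * B) := by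
            congr 1
            simp only [Matrix.transpose_mul, Matrix.mul_assoc]
      _ = Matrix.trace (B * (Bᵀ * ((f t)ᵀ * Cᵀ * C * f t))) := Matrix.trace_mul_comm _ _
      _ = Matrix.trace (B * Bᵀ * ((f t)ᵀ * Cᵀ * C * f t)) := by
            simp only [← Matrix.mul_assoc]
    constructor
    · -- P identity
      have hPsum : Matrix.trace (C * P * Cᵀ) = ∑ k, ∑ l, (Cᵀ * C) k l * P l k := by
        rw [Matrix.trace_mul_cycle, aux_trace_mul_sum]
      rw [hPsum]
      have : ∀ k l : Fin n, (Cᵀ * C) k l * P l k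
          = ∫ t in Set.Ioi (0:ℝ), (Cᵀ * C) k l * (f t * B * Bᵀ * (f t)ᵀ) l k := by
        intro k l
        rw [hP l k, ← integral_const_mul]
      calc (∫ t in Set.Ioi (0:ℝ), φ t)
          = ∫ t in Set.Ioi (0:ℝ), ∑ k, ∑ l, (Cᵀ * C) k l * (f t * B * Bᵀ * (f t)ᵀ) l k := by
            refine integral_congr_ae ?_
            filter_upwards with t
            exact hptP t
      _ = ∑ k, ∑ l, ∫ t in Set.Ioi (0:ℝ), (Cᵀ * C) k l * (f t * B * Bᵀ * (f t)ᵀ) l k := by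
            rw [integral_finset_sum]
            · refine Finset.sum_congr rfl fun k _ => ?_
              rw [integral_finset_sum]
              intro l _
              exact (hIP l k).const_mul _
            · intro k _
              exact integrable_finset_sum _ fun l _ => (hIP l k).const_mul _
      _ = ∑ k, ∑ l, (Cᵀ * C) k l * P l k := by
            refine Finset.sum_congr rfl fun k _ => Finset.sum_congr rfl fun l _ => ?_
            rw [this k l]
    · -- Q identity
      have hQsum : Matrix.trace (Bᵀ * Q * B) = ∑ k, ∑ l, (B * Bᵀ) k l * Q l k := by
        rw [Matrix.trace_mul_cycle, aux_trace_mul_sum]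
      rw [hQsum]
      have : ∀ k l : Fin n, (B * Bᵀ) k l * Q l k
          = ∫ t in Set.Ioi (0:ℝ), (B * Bᵀ) k l * ((f t)ᵀ * Cᵀ * C * f t) l k := by
        intro k l
        rw [hQ l k, ← integral_const_mul]
      calc (∫ t in Set.Ioi (0:ℝ), φ t)
          = ∫ t in Set.Ioi (0:ℝ), ∑ k, ∑ l, (B * Bᵀ) k l * ((f t)ᵀ * Cᵀ * C * f t) l k := by
            refine integral_congr_ae ?_
            filter_upwards with t
            exact hptQ t
      _ = ∑ k, ∑ l, ∫ t in Set.Ioi (0:ℝ), (B * Bᵀ) k l * ((f t)ᵀ * Cᵀ * C * f t) l k := by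
            rw [integral_finset_sum]
            · refine Finset.sum_congr rfl fun k _ => ?_
              rw [integral_finset_sum]
              intro l _
              exact (hIQ l k).const_mul _
            · intro k _
              exact integrable_finset_sum _ fun l _ => (hIQ l k).const_mul _
      _ = ∑ k, ∑ l, (B * Bᵀ) k l * Q l k := by
            refine Finset.sum_congr rfl fun k _ => Finset.sum_congr rfl fun l _ => ?_
            rw [this k l]
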